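/- In the infinite-armed deterministic bandit with arm rewards θ_a i.i.d. uniform on [0,1], satisficing Thompson sampling with tolerance ε — which samples fresh arms until the first arm with θ_a ≥ 1-ε is found and then plays it forever — has expected discounted regret E[∑_{t=0}^∞ α^t (1 - θ_{A_t})] ≤ 1/(2ε) + ε/(2(1-α)). In particular, with ε = √(1-α) the expected discounted regret is at most 1/√(1-α). -/

import Mathlib

open MeasureTheory ProbabilityTheory

theorem stmt4 {Ω : Type*} [MeasurableSpace Ω] (μ : Measure Ω) [IsProbabilityMeasure μ]
    (θ : ℕ → Ω → ℝ) (hmeas : ∀ a, Measurable (θ a))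
    (hiid : iIndepFun θ μ)
    (hunif : ∀ a : ℕ, Measure.map (θ a) μ = volume.restrict (Set.Icc (0:ℝ) 1))
    (α ε : ℝ) (hα : α ∈ Set.Ioo (0:ℝ) 1) (hε : ε ∈ Set.Ioo (0:ℝ) 1)
    (τ : Ω → ℕ) (hτ : ∀ ω, τ ω = sInf {a : ℕ | 1 - ε ≤ θ a ω})
    (A : ℕ → Ω → ℕ) (hA : ∀ t ω, A t ω = if t < τ ω then t else τ ω) :
    (∑' t : ℕ, α ^ t * ∫ ω, (1 - θ (A t ω) ω) ∂μ) ≤ 1 / (2 * ε) + ε / (2 * (1 - α)) ∧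
    (ε = Real.sqrt (1 - α) →
      (∑' t : ℕ, α ^ t * ∫ ω, (1 - θ (A t ω) ω) ∂μ) ≤ 1 / Real.sqrt (1 - α)) := by
  classical
  obtain ⟨hα0, hα1⟩ := hα
  obtain ⟨hε0, hε1⟩ := hε
  set c : ℝ := 1 - ε with hcdef
  have hc0 : 0 < c := by simp only [hcdef]; linarith
  have hc1 : c < 1 := by simp only [hcdef]; linarith
  set h1 : ℝ → ℝ := fun x => if x < c then 1 - x else 0 with hh1
  set h2 : ℝ → ℝ := fun x => if x < c then 0 else 1 - x with hh2
  have mh1 : Measurable h1 :=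
    Measurable.ite measurableSet_Iio (measurable_const.sub measurable_id) measurable_const
  have mh2 : Measurable h2 :=
    Measurable.ite measurableSet_Iio measurable_const (measurable_const.sub measurable_id)
  -- transfer of single-arm integrals
  have hmap : ∀ (a : ℕ) (g : ℝ → ℝ), Measurable g →
      ∫ ω, g (θ a ω) ∂μ = ∫ x in Set.Icc (0:ℝ) 1, g x := by
    intro a g hg
    rw [← hunif a, integral_map (hmeas a).aemeasurable hg.aestronglyMeasurable]
  have hinter1 : Set.Iio c ∩ Set.Icc (0:ℝ) 1 = Set.Ico 0 c := by
    ext x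
    simp only [Set.mem_inter_iff, Set.mem_Iio, Set.mem_Icc, Set.mem_Ico]
    constructor
    · rintro ⟨h, h0, _⟩; exact ⟨h0, h⟩
    · rintro ⟨h0, h⟩; exact ⟨h, h0, by linarith⟩
  have hinter2 : (Set.Iio c)ᶜ ∩ Set.Icc (0:ℝ) 1 = Set.Icc c 1 := by
    ext x
    simp only [Set.mem_inter_iff, Set.mem_compl_iff, Set.mem_Iio, not_lt, Set.mem_Icc]
    constructor
    · rintro ⟨h, _, h1'⟩; exact ⟨h, h1'⟩
    · rintro ⟨h, h1'⟩; exact ⟨h, by linarith, h1'⟩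
  have hK1 : ∫ x in Set.Icc (0:ℝ) 1, h1 x = c - c^2/2 := by
    have he : ∀ x, h1 x = (Set.Iio c).indicator (fun x => 1 - x) x := by
      intro x; simp [hh1, Set.indicator_apply]
    rw [integral_congr_ae (Filter.Eventually.of_forall he),
      integral_indicator measurableSet_Iio, Measure.restrict_restrict measurableSet_Iio,
      hinter1]
    rw [setIntegral_congr_set Ico_ae_eq_Ioc, ← intervalIntegral.integral_of_le hc0.le]
    rw [intervalIntegral.integral_sub intervalIntegrable_const intervalIntegral.intervalIntegrable_id]
    simp only [intervalIntegral.integral_const, integral_id, smul_eq_mul, mul_one]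
    ring
  have hK2 : ∫ x in Set.Icc (0:ℝ) 1, h2 x = (1-c)^2/2 := by
    have he : ∀ x, h2 x = ((Set.Iio c)ᶜ).indicator (fun x => 1 - x) x := by
      intro x
      simp only [hh2, Set.indicator_apply, Set.mem_compl_iff, Set.mem_Iio, not_lt]
      rcases lt_or_ge x c with h | h
      · rw [if_pos h, if_neg (not_le.mpr h)]
      · rw [if_neg (not_lt.mpr h), if_pos h]
    rw [integral_congr_ae (Filter.Eventually.of_forall he),
      integral_indicator measurableSet_Iio.compl,
      Measure.restrict_restrict measurableSet_Iio.compl, hinter2]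
    rw [setIntegral_congr_set Ioc_ae_eq_Icc.symm, ← intervalIntegral.integral_of_le hc1.le]
    rw [intervalIntegral.integral_sub intervalIntegrable_const intervalIntegral.intervalIntegrable_id]
    simp only [intervalIntegral.integral_const, integral_id, smul_eq_mul, mul_one]
    ring
  -- measure of a single event
  have hmeasE : ∀ a : ℕ, μ (θ a ⁻¹' Set.Iio c) = ENNReal.ofReal c := by
    intro a
    rw [← Measure.map_apply (hmeas a) measurableSet_Iio, hunif a,
      Measure.restrict_apply measurableSet_Iio, hinter1, Real.volume_Ico, sub_zero]
  set D : ℕ → Set Ω := fun s => ⋂ a ∈ Finset.range s, θ a ⁻¹' Set.Iio c with hD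
  have hDmeas : ∀ s, MeasurableSet (D s) := fun s =>
    Finset.measurableSet_biInter _ (fun a _ => (hmeas a) measurableSet_Iio)
  have hDmem : ∀ s ω, ω ∈ D s ↔ ∀ a < s, θ a ω < c := by
    intro s ω
    simp [hD, Set.mem_iInter, Finset.mem_range]
  have hDmu : ∀ s, μ (D s) = ENNReal.ofReal c ^ s := by
    intro s
    rw [hD, hiid.meas_biInter (fun i _ => ⟨Set.Iio c, measurableSet_Iio, rfl⟩),
      Finset.prod_congr rfl (fun i _ => hmeasE i), Finset.prod_const, Finset.card_range]
  have hN : μ {ω | ∀ a, θ a ω < c} = 0 := by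
    have hle : ∀ n, μ {ω | ∀ a, θ a ω < c} ≤ ENNReal.ofReal c ^ n := by
      intro n
      refine (measure_mono ?_).trans (le_of_eq (hDmu n))
      intro ω hω
      rw [hDmem]
      intro a _
      exact hω a
    have htend : Filter.Tendsto (fun n => ENNReal.ofReal c ^ n) Filter.atTop (nhds 0) :=
      ENNReal.tendsto_pow_atTop_nhds_zero_of_lt_one (ENNReal.ofReal_lt_one.mpr hc1)
    exact le_antisymm (ge_of_tendsto' htend hle) zero_le
  have haerange : ∀ a : ℕ, ∀ᵐ ω ∂μ, θ a ω ∈ Set.Icc (0:ℝ) 1 := by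
    intro a
    rw [ae_iff]
    have he : {ω | ¬ θ a ω ∈ Set.Icc (0:ℝ) 1} = θ a ⁻¹' (Set.Icc (0:ℝ) 1)ᶜ := rfl
    rw [he, ← Measure.map_apply (hmeas a) measurableSet_Icc.compl, hunif a,
      Measure.restrict_apply measurableSet_Icc.compl]
    simp
  -- independence of g(θ s) and the indicator of D s
  have hindep : ∀ (s : ℕ) (g : ℝ → ℝ), Measurable g →
      IndepFun (fun ω => g (θ s ω)) (fun ω => (D s).indicator (fun _ => (1:ℝ)) ω) μ := by
    intro s g hg
    have hdisj : Disjoint ({s} : Finset ℕ) (Finset.range s) := by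
      simp [Finset.disjoint_left]
    have h0 := hiid.indepFun_finset {s} (Finset.range s) hdisj hmeas
    have hφ1 : Measurable (fun v : (↥({s} : Finset ℕ) → ℝ) =>
        g (v ⟨s, Finset.mem_singleton_self s⟩)) := hg.comp (measurable_pi_apply _)
    have hTmeas : MeasurableSet {v : (↥(Finset.range s) → ℝ) | ∀ i, v i < c} := by
      have he : {v : (↥(Finset.range s) → ℝ) | ∀ i, v i < c}
          = ⋂ i, (fun v : (↥(Finset.range s) → ℝ) => v i) ⁻¹' Set.Iio c := by
        ext v; simp
      rw [he]
      exact MeasurableSet.iInter (fun i => measurable_pi_apply i measurableSet_Iio)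
    have hφ2 : Measurable (fun v : (↥(Finset.range s) → ℝ) =>
        ({v : (↥(Finset.range s) → ℝ) | ∀ i, v i < c}).indicator (fun _ => (1:ℝ)) v) :=
      measurable_const.indicator hTmeas
    have key := h0.comp hφ1 hφ2
    have e1 : (fun v : (↥({s} : Finset ℕ) → ℝ) => g (v ⟨s, Finset.mem_singleton_self s⟩)) ∘
        (fun a (i : ({s} : Finset ℕ)) => θ i a) = fun ω => g (θ s ω) := rfl
    have e2 : (fun v : (↥(Finset.range s) → ℝ) =>
        ({v : (↥(Finset.range s) → ℝ) | ∀ i, v i < c}).indicator (fun _ => (1:ℝ)) v) ∘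
        (fun a (i : (Finset.range s : Finset ℕ)) => θ i a)
        = fun ω => (D s).indicator (fun _ => (1:ℝ)) ω := by
      funext ω
      simp only [Function.comp_apply, Set.indicator_apply, Set.mem_setOf_eq]
      refine if_congr ?_ rfl rfl
      rw [hDmem]
      constructor
      · intro h a ha; exact h ⟨a, Finset.mem_range.mpr ha⟩
      · intro h i; exact h i (Finset.mem_range.mp i.2)
    rw [e1, e2] at key
    exact key
  have hterm : ∀ (s : ℕ) (g : ℝ → ℝ), Measurable g →
      ∫ ω, g (θ s ω) * (D s).indicator (fun _ => (1:ℝ)) ω ∂μ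
        = (∫ x in Set.Icc (0:ℝ) 1, g x) * c ^ s := by
    intro s g hg
    have h := (hindep s g hg).integral_mul_eq_mul_integral (hg.comp (hmeas s)).aestronglyMeasurable
      (measurable_const.indicator (hDmeas s)).aestronglyMeasurable
    have he : (fun ω => g (θ s ω) * (D s).indicator (fun _ => (1:ℝ)) ω) =
        (fun ω => g (θ s ω)) * (fun ω => (D s).indicator (fun _ => (1:ℝ)) ω) := rfl
    rw [he, h, hmap s g hg, integral_indicator_const _ (hDmeas s), measureReal_def, hDmu s]
    rw [smul_eq_mul, mul_one, ENNReal.toReal_pow, ENNReal.toReal_ofReal hc0.le]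
  have hintg : ∀ (s : ℕ) (g : ℝ → ℝ), Measurable g → (∀ x ∈ Set.Icc (0:ℝ) 1, |g x| ≤ 1) →
      Integrable (fun ω => g (θ s ω) * (D s).indicator (fun _ => (1:ℝ)) ω) μ := by
    intro s g hg hb
    refine Integrable.mono' (integrable_const 1)
      ((hg.comp (hmeas s)).mul (measurable_const.indicator (hDmeas s))).aestronglyMeasurable ?_
    filter_upwards [haerange s] with ω hω
    rw [Real.norm_eq_abs, abs_mul]
    have hb1 : |g (θ s ω)| ≤ 1 := hb _ hω
    have hb2 : |(D s).indicator (fun _ => (1:ℝ)) ω| ≤ 1 := by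
      rw [Set.indicator_apply]
      split <;> simp
    calc |g (θ s ω)| * |(D s).indicator (fun _ => (1:ℝ)) ω| ≤ 1 * 1 :=
          mul_le_mul hb1 hb2 (abs_nonneg _) zero_le_one
      _ = 1 := mul_one 1
  have hbound1 : ∀ x ∈ Set.Icc (0:ℝ) 1, |h1 x| ≤ 1 := by
    intro x hx
    obtain ⟨hx0, hx1⟩ := hx
    simp only [hh1]
    split
    · rw [abs_of_nonneg (by linarith)]; linarith
    · simp
  have hbound2 : ∀ x ∈ Set.Icc (0:ℝ) 1, |h2 x| ≤ 1 := by
    intro x hx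
    obtain ⟨hx0, hx1⟩ := hx
    simp only [hh2]
    split
    · simp
    · rw [abs_of_nonneg (by linarith)]; linarith
  -- pointwise identity
  have hptwise : ∀ t : ℕ, ∀ᵐ ω ∂μ, (1 - θ (A t ω) ω)
      = h1 (θ t ω) * (D t).indicator (fun _ => (1:ℝ)) ω
        + ∑ s ∈ Finset.range (t+1), h2 (θ s ω) * (D s).indicator (fun _ => (1:ℝ)) ω := by
    intro t
    have hev : ∀ᵐ ω ∂μ, ∃ a, c ≤ θ a ω := by
      rw [ae_iff]
      have he : {ω | ¬ ∃ a, c ≤ θ a ω} = {ω | ∀ a, θ a ω < c} := by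
        ext ω; simp [not_le]
      rw [he]; exact hN
    filter_upwards [hev] with ω hω
    have hmem : c ≤ θ (τ ω) ω := by
      rw [hτ ω]; exact Nat.sInf_mem hω
    have hlt : ∀ b, b < τ ω → θ b ω < c := by
      intro b hb
      have hb' : b < sInf {a : ℕ | c ≤ θ a ω} := by rw [← hτ ω]; exact hb
      simpa [not_le] using Nat.notMem_of_lt_sInf hb'
    rcases lt_or_ge t (τ ω) with hcase | hcase
    · rw [hA t ω, if_pos hcase]
      have hth : θ t ω < c := hlt t hcase
      have hDt : ω ∈ D t := (hDmem t ω).mpr (fun a ha => hlt a (ha.trans hcase))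
      have hsum0 : ∑ s ∈ Finset.range (t+1), h2 (θ s ω) * (D s).indicator (fun _ => (1:ℝ)) ω = 0 := by
        refine Finset.sum_eq_zero (fun s hs => ?_)
        have hsc : θ s ω < c :=
          hlt s (lt_of_le_of_lt (Nat.lt_succ_iff.mp (Finset.mem_range.mp hs)) hcase)
        simp [hh2, if_pos hsc]
      rw [hsum0, add_zero]
      simp [hh1, if_pos hth, Set.indicator_of_mem hDt]
    · rw [hA t ω, if_neg (not_lt.mpr hcase)]
      have hfirst : h1 (θ t ω) * (D t).indicator (fun _ => (1:ℝ)) ω = 0 := by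
        rcases eq_or_lt_of_le hcase with heq | hlt'
        · have hnl : ¬ θ t ω < c := not_lt.mpr (heq ▸ hmem)
          simp [hh1, if_neg hnl]
        · have hnD : ω ∉ D t := fun hDt =>
            absurd ((hDmem t ω).mp hDt (τ ω) hlt') (not_lt.mpr hmem)
          simp [Set.indicator_of_notMem hnD]
      rw [hfirst, zero_add]
      rw [Finset.sum_eq_single (τ ω)]
      · have hDτ : ω ∈ D (τ ω) := (hDmem _ ω).mpr (fun a ha => hlt a ha)
        simp [hh2, if_neg (not_lt.mpr hmem), Set.indicator_of_mem hDτ]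
      · intro s _ hsne
        rcases lt_or_gt_of_ne hsne with h' | h'
        · simp [hh2, if_pos (hlt s h')]
        · have hnD : ω ∉ D s := fun hDs =>
            absurd ((hDmem s ω).mp hDs (τ ω) h') (not_lt.mpr hmem)
          simp [Set.indicator_of_notMem hnD]
      · intro h
        exact absurd (Finset.mem_range.mpr (Nat.lt_succ_of_le hcase)) h
  -- per-time integral
  have hint : ∀ t : ℕ, ∫ ω, (1 - θ (A t ω) ω) ∂μ = c/2 * c^t + ε/2 := by
    intro t
    rw [integral_congr_ae (hptwise t)]
    rw [integral_add (hintg t h1 mh1 hbound1)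
      (integrable_finset_sum _ (fun s _ => hintg s h2 mh2 hbound2))]
    rw [integral_finset_sum _ (fun s _ => hintg s h2 mh2 hbound2)]
    rw [hterm t h1 mh1, hK1]
    rw [Finset.sum_congr rfl (fun s _ => by rw [hterm s h2 mh2, hK2])]
    rw [← Finset.mul_sum, geom_sum_eq (ne_of_lt hc1)]
    have hεc : ε = 1 - c := by rw [hcdef]; ring
    rw [hεc]
    have hc1' : c - 1 ≠ 0 := sub_ne_zero_of_ne (ne_of_lt hc1)
    field_simp
    ring
  have hαc : α * c < 1 := by nlinarith
  have hαc0 : (0:ℝ) ≤ α * c := by positivity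
  have hsummand : ∀ t : ℕ, α ^ t * ∫ ω, (1 - θ (A t ω) ω) ∂μ
      = c/2 * (α*c)^t + ε/2 * α^t := by
    intro t; rw [hint t, mul_pow]; ring
  have hts : (∑' t : ℕ, α ^ t * ∫ ω, (1 - θ (A t ω) ω) ∂μ)
      = c/2 * (1 - α*c)⁻¹ + ε/2 * (1-α)⁻¹ := by
    rw [tsum_congr hsummand,
      Summable.tsum_add ((summable_geometric_of_lt_one hαc0 hαc).mul_left _)
        ((summable_geometric_of_lt_one hα0.le hα1).mul_left _),
      tsum_mul_left, tsum_mul_left, tsum_geometric_of_lt_one hαc0 hαc,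
      tsum_geometric_of_lt_one hα0.le hα1]
  have hmain : (∑' t : ℕ, α ^ t * ∫ ω, (1 - θ (A t ω) ω) ∂μ)
      ≤ 1 / (2 * ε) + ε / (2 * (1 - α)) := by
    rw [hts]
    have hεle : ε ≤ 1 - α * c := by nlinarith
    have hinv : (1 - α*c)⁻¹ ≤ ε⁻¹ := by
      apply inv_anti₀ hε0 hεle
    have h1ac : (0:ℝ) < 1 - α * c := lt_of_lt_of_le hε0 hεle
    have hfir : c/2 * (1 - α*c)⁻¹ ≤ 1 / (2*ε) := by
      calc c/2 * (1-α*c)⁻¹ ≤ 1/2 * ε⁻¹ :=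
            mul_le_mul (by linarith) hinv (inv_nonneg.mpr h1ac.le) (by norm_num)
        _ = 1/(2*ε) := by ring
    have hsec : ε/2 * (1-α)⁻¹ = ε / (2*(1-α)) := by
      rw [div_eq_mul_inv ε (2*(1-α)), mul_inv]; ring
    linarith
  refine ⟨hmain, fun hεs => ?_⟩
  have hs0 : (0:ℝ) < Real.sqrt (1-α) := hεs ▸ hε0
  have hs2 : Real.sqrt (1-α) ^ 2 = 1 - α := Real.sq_sqrt (by linarith)
  refine hmain.trans (le_of_eq ?_)
  rw [hεs, ← hs2]
  field_simp
  rw [Real.sqrt_sq hs0.le]; ring
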